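/- Let q ≥ 2 be an integer and A(z) an N×N matrix with entries in ℂ[z], with A = Σ_{j=0}^{d} A_j z^j. Suppose f(z) = Σ_{h≥0} c_h z^h ∈ ℂ[[z]]^N satisfies f(z) = A(z)·f(z^q). Let M_h be the maximum over 0 ≤ i ≤ h of the L¹-norms ‖c_i‖₁, and let ‖A‖ be the sum of the L¹-norms of the rows of A_0, …, A_d. Then M_h ≤ ‖A‖ · M_{⌊h/q⌋} for all h ≥ 1. -/

import Mathlib

open Finset

lemma l1_mulVec_aux (N : ℕ) (B : Matrix (Fin N) (Fin N) ℂ) (x : Fin N → ℂ) :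
    ∑ t, ‖B.mulVec x t‖ ≤
      (∑ i, ∑ k, ‖B i k‖) * ∑ t, ‖x t‖ := by
  have h1 : ∀ t : Fin N, ‖B.mulVec x t‖
      ≤ ∑ k, ‖B t k‖ * ‖x k‖ := by
    intro t
    simpa [Matrix.mulVec, dotProduct, norm_mul] using
      norm_sum_le Finset.univ (fun k => B t k * x k)
  calc ∑ t, ‖B.mulVec x t‖
      ≤ ∑ t, ∑ k, ‖B t k‖ * ‖x k‖ :=
        Finset.sum_le_sum fun t _ => h1 t
    _ ≤ ∑ t, ∑ k, ‖B t k‖ * ∑ s, ‖x s‖ := by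
        refine Finset.sum_le_sum fun t _ => Finset.sum_le_sum fun k _ => ?_
        exact mul_le_mul_of_nonneg_left
          (Finset.single_le_sum (fun s _ => norm_nonneg _) (Finset.mem_univ k))
          (norm_nonneg _)
    _ = (∑ i, ∑ k, ‖B i k‖) * ∑ t, ‖x t‖ := by
        rw [Finset.sum_mul]; congr 1; ext t; rw [Finset.sum_mul]

/-- Coefficient estimate for Mahler systems with polynomial matrix: from the coefficient
recursion `c_h = Σ_{j ≡ h (mod q), j ≤ min(h,d)} A_j · c_{(h-j)/q}` one gets
`M_h ≤ ‖A‖ · M_{⌊h/q⌋}`, where `M_h` is the maximum of the `L¹`-norms of `c_0,…,c_h`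
and `‖A‖` is the sum of the `L¹`-norms of the rows of `A_0,…,A_d`. -/
theorem stmt2 (q : ℕ) (hq : 2 ≤ q) (N d : ℕ)
    (A : ℕ → Matrix (Fin N) (Fin N) ℂ) (c : ℕ → Fin N → ℂ)
    (hrec : ∀ h : ℕ, c h =
      ∑ j ∈ (Finset.range (min h d + 1)).filter (fun j => j % q = h % q),
        (A j).mulVec (c ((h - j) / q)))
    (M : ℕ → ℝ) (hM : ∀ h, M h = (Finset.range (h + 1)).sup' nonempty_range_add_one
      (fun i => ∑ t, ‖c i t‖))
    (normA : ℝ) (hnormA : normA = ∑ j ∈ Finset.range (d + 1), ∑ i, ∑ k, ‖A j i k‖) :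
    ∀ h : ℕ, 1 ≤ h → M h ≤ normA * M (h / q) := by
  intro h _
  have hMnonneg : ∀ n, (0:ℝ) ≤ M n := by
    intro n
    rw [hM]
    refine le_trans (Finset.sum_nonneg fun t _ => norm_nonneg _)
      (Finset.le_sup' (fun i => ∑ t, ‖c i t‖)
        (Finset.mem_range.mpr (Nat.succ_pos n)))
  have hle : ∀ m, m ≤ h / q → (∑ t, ‖c m t‖) ≤ M (h / q) := by
    intro m hm
    rw [hM]
    exact Finset.le_sup' (fun i => ∑ t, ‖c i t‖)
      (Finset.mem_range.mpr (Nat.lt_succ_of_le hm))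
  rw [hM]
  apply Finset.sup'_le
  intro i hi
  have hih : i ≤ h := Nat.lt_succ_iff.mp (Finset.mem_range.mp hi)
  rw [hrec i]
  set S := (Finset.range (min i d + 1)).filter (fun j => j % q = i % q) with hS
  calc ∑ t, ‖(∑ j ∈ S, (A j).mulVec (c ((i - j) / q))) t‖
      ≤ ∑ t, ∑ j ∈ S, ‖(A j).mulVec (c ((i - j) / q)) t‖ := by
        refine Finset.sum_le_sum fun t _ => ?_
        simpa using norm_sum_le S (fun j => (A j).mulVec (c ((i - j) / q)) t)
    _ = ∑ j ∈ S, ∑ t, ‖(A j).mulVec (c ((i - j) / q)) t‖ :=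
        Finset.sum_comm
    _ ≤ ∑ j ∈ S, (∑ a, ∑ k, ‖A j a k‖) * M (h / q) := by
        refine Finset.sum_le_sum fun j hj => ?_
        refine le_trans (l1_mulVec_aux N (A j) (c ((i - j) / q))) ?_
        refine mul_le_mul_of_nonneg_left ?_
          (Finset.sum_nonneg fun a _ => Finset.sum_nonneg fun k _ => norm_nonneg _)
        apply hle
        calc (i - j) / q ≤ i / q := Nat.div_le_div_right (Nat.sub_le i j)
          _ ≤ h / q := Nat.div_le_div_right hih
    _ ≤ ∑ j ∈ Finset.range (d + 1), (∑ a, ∑ k, ‖A j a k‖) * M (h / q) := by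
        refine Finset.sum_le_sum_of_subset_of_nonneg ?_ ?_
        · intro j hj
          rw [hS, Finset.mem_filter, Finset.mem_range] at hj
          exact Finset.mem_range.mpr (lt_of_lt_of_le hj.1
            (Nat.succ_le_succ (min_le_right i d)))
        · intro j _ _
          exact mul_nonneg
            (Finset.sum_nonneg fun a _ => Finset.sum_nonneg fun k _ => norm_nonneg _)
            (hMnonneg _)
    _ = normA * M (h / q) := by rw [hnormA, Finset.sum_mul]
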